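/- (Optimal sketches achieve the variance–rank trade-off.) Let B be a symmetric positive definite d×d real matrix with eigendecomposition B = Q Λ Qᵀ, where Q is orthogonal and Λ is diagonal with positive diagonal entries. Let c = (c_1, …, c_d) be a random vector with entries in {0,1} and marginals Prob(c_j = 1) = p_j ∈ [0,1], and let C = Diag(c). Then: sup over x with ‖x‖_B = 1 of E‖Q C Qᵀ x − x‖²_B = 1 − min_{1≤j≤d} p_j, and E[ rank(C Qᵀ) ] = Σ_{j=1}^d p_j. In particular, if p_j = q ∈ [0,1] for all j, then the compression x ↦ Q C Qᵀ x (encoder S = C Qᵀ with decoder y ↦ Q y) has worst-case expected squared B-error 1 − q and expected rank q d, so that (worst-case error) + (expected rank)/d = 1. -/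

import Mathlib

open scoped BigOperators RealInnerProductSpace
open Matrix

noncomputable section

/-- A proper sampling on `{1,…,d}`: a finitely supported probability distribution over
subsets of `Fin d` whose marginal probabilities are all positive. -/
structure Sampling (d : ℕ) where
  prob : Finset (Fin d) → ℝ
  nonneg : ∀ S, 0 ≤ prob S
  total : ∑ S : Finset (Fin d), prob S = 1
  margPos : ∀ j : Fin d, 0 < ∑ S : Finset (Fin d), if j ∈ S then prob S else 0

namespace Sampling

variable {d : ℕ} (μ : Sampling d)

/-- Marginal probability `p_j = Prob(j ∈ S)`. -/
def marg (j : Fin d) : ℝ := ∑ S : Finset (Fin d), if j ∈ S then μ.prob S else 0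

/-- Probability matrix `P`, with entries `p_{jl} = Prob({j,l} ⊆ S)`. -/
def probMatrix : Matrix (Fin d) (Fin d) ℝ :=
  Matrix.of fun j l => ∑ S : Finset (Fin d), if j ∈ S ∧ l ∈ S then μ.prob S else 0

/-- The matrix `P̄` with entries `p_{jl}/(p_j p_l)`. -/
def Pbar : Matrix (Fin d) (Fin d) ℝ :=
  Matrix.of fun j l => μ.probMatrix j l / (μ.marg j * μ.marg l)

/-- The matrix `P̃ = P̄ − E` where `E` is the all-ones matrix. -/
def Ptilde : Matrix (Fin d) (Fin d) ℝ := μ.Pbar - Matrix.of fun _ _ => (1 : ℝ)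

/-- The unbiased diagonal sketch `C` associated with a realization `S` of the sampling. -/
def sketch (S : Finset (Fin d)) : Matrix (Fin d) (Fin d) ℝ :=
  Matrix.diagonal fun j => if j ∈ S then (μ.marg j)⁻¹ else 0

end Sampling

/-- Largest eigenvalue of a symmetric matrix, via the Rayleigh quotient. -/
def lambdaMax {d : ℕ} (M : Matrix (Fin d) (Fin d) ℝ) : ℝ :=
  sSup {r : ℝ | ∃ v : Fin d → ℝ, v ⬝ᵥ v = 1 ∧ r = v ⬝ᵥ M.mulVec v}

/-- Smallest eigenvalue of a symmetric matrix, via the Rayleigh quotient. -/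
def lambdaMin {d : ℕ} (M : Matrix (Fin d) (Fin d) ℝ) : ℝ :=
  sInf {r : ℝ | ∃ v : Fin d → ℝ, v ⬝ᵥ v = 1 ∧ r = v ⬝ᵥ M.mulVec v}

/-- `Mdag` is the Moore–Penrose pseudoinverse of `M`. -/
def IsMoorePenrose {m n : Type*} [Fintype m] [Fintype n]
    (M : Matrix m n ℝ) (Mdag : Matrix n m ℝ) : Prop :=
  M * Mdag * M = M ∧ Mdag * M * Mdag = Mdag ∧
    (M * Mdag)ᵀ = M * Mdag ∧ (Mdag * M)ᵀ = Mdag * M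

/-- Vectors in `ℝ^d` with the Euclidean inner product. -/
abbrev Vec (d : ℕ) := EuclideanSpace ℝ (Fin d)

/-- Action of a matrix on a Euclidean vector. -/
def mact {d e : ℕ} (M : Matrix (Fin e) (Fin d) ℝ) (x : Vec d) : Vec e :=
  Matrix.toEuclideanLin M x

/-- Quadratic form `xᵀ M x`, i.e. the squared `M`-seminorm `‖x‖²_M`. -/
def quad {d : ℕ} (M : Matrix (Fin d) (Fin d) ℝ) (x : Vec d) : ℝ := ⟪x, mact M x⟫

/-- `f` is `M`-smooth: `f x ≤ f y + ⟨∇f(y), x−y⟩ + ½ (x−y)ᵀ M (x−y)` for all `x, y`. -/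
def MSmooth {d : ℕ} (f : Vec d → ℝ) (M : Matrix (Fin d) (Fin d) ℝ) : Prop :=
  ∀ x y : Vec d, f x ≤ f y + ⟪gradient f y, x - y⟫ + (1 / 2) * quad M (x - y)

/-- Random iterates driven by i.i.d. draws: `traj x0 step k ω` is the `k`-th iterate along
the sample path `ω` of `k` draws. -/
def traj {V Ω : Type*} (x0 : V) (step : V → Ω → V) : ∀ k : ℕ, (Fin k → Ω) → V
  | 0, _ => x0
  | k + 1, ω => step (traj x0 step k fun i => ω i.castSucc) (ω (Fin.last k))

/-- Expectation `E[φ(x^k)]` of a functional of the `k`-th iterate, over `k` i.i.d. draws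
with one-step distribution `P`. -/
def trajExp {V Ω : Type*} [Fintype Ω] (P : Ω → ℝ) (x0 : V) (step : V → Ω → V)
    (φ : V → ℝ) (k : ℕ) : ℝ :=
  ∑ ω : Fin k → Ω, (∏ i, P (ω i)) * φ (traj x0 step k ω)


/-- optimal sketches achieve the variance–rank trade-off. For
`B = Q Λ Qᵀ` and a random 0/1 diagonal `C = Diag(c)` with marginals `p_j`,
the worst-case expected squared `B`-error of `x ↦ Q C Qᵀ x` over the unit `B`-sphere is
`1 − min_j p_j` and `E[rank(C Qᵀ)] = Σ_j p_j`; in particular, with uniform marginals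
`p_j = q` the error is `1 − q`, the expected rank is `q d`, and
(worst-case error) + (expected rank)/d = 1. -/
theorem statement19 {d : ℕ} (hd : 0 < d) (B Q Λm : Matrix (Fin d) (Fin d) ℝ)
    (lam : Fin d → ℝ) (hlam : ∀ j, 0 < lam j) (hΛ : Λm = Matrix.diagonal lam)
    (hQ1 : Qᵀ * Q = 1) (hQ2 : Q * Qᵀ = 1) (hB : B = Q * Λm * Qᵀ)
    {ι : Type} [Fintype ι] (w : ι → ℝ) (hw : ∀ i, 0 ≤ w i) (hw1 : ∑ i, w i = 1)
    (c : ι → Fin d → ℝ) (hc : ∀ i j, c i j = 0 ∨ c i j = 1)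
    (p : Fin d → ℝ) (hp : ∀ j, p j = ∑ i, w i * c i j)
    (hp01 : ∀ j, 0 ≤ p j ∧ p j ≤ 1)
    (errSup : ℝ)
    (herr : errSup = sSup {e : ℝ | ∃ x : Fin d → ℝ, x ⬝ᵥ B.mulVec x = 1 ∧
      e = ∑ i, w i * (((Q * Matrix.diagonal (c i) * Qᵀ).mulVec x - x) ⬝ᵥ
            B.mulVec ((Q * Matrix.diagonal (c i) * Qᵀ).mulVec x - x))})
    (expRank : ℝ)
    (hrk : expRank = ∑ i, w i * ((Matrix.diagonal (c i) * Qᵀ).rank : ℝ)) :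
    errSup = 1 - ⨅ j, p j ∧
    expRank = ∑ j, p j ∧
    ∀ q : ℝ, (∀ j, p j = q) →
      errSup = 1 - q ∧ expRank = q * d ∧ errSup + expRank / (d : ℝ) = 1 := by
  haveI : Nonempty (Fin d) := ⟨⟨0, hd⟩⟩
  have hQv : ∀ v : Fin d → ℝ, Qᵀ.mulVec (Q.mulVec v) = v := by
    intro v; rw [Matrix.mulVec_mulVec, hQ1, Matrix.one_mulVec]
  -- quadratic form of Q * diagonal f * Qᵀ
  have quadGen : ∀ (f : Fin d → ℝ) (y : Fin d → ℝ),
      y ⬝ᵥ (Q * Matrix.diagonal f * Qᵀ).mulVec y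
        = ∑ j, f j * (Qᵀ.mulVec y j) ^ 2 := by
    intro f y
    rw [← Matrix.mulVec_mulVec, ← Matrix.mulVec_mulVec, Matrix.dotProduct_mulVec,
      ← Matrix.mulVec_transpose]
    simp only [dotProduct, Matrix.mulVec_diagonal]
    exact Finset.sum_congr rfl fun j _ => by ring
  have quadB : ∀ y : Fin d → ℝ, y ⬝ᵥ B.mulVec y = ∑ j, lam j * (Qᵀ.mulVec y j) ^ 2 := by
    intro y; rw [hB, hΛ, quadGen]
  -- the error vector identity
  have herrvec : ∀ (i : ι) (x : Fin d → ℝ),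
      Qᵀ.mulVec ((Q * Matrix.diagonal (c i) * Qᵀ).mulVec x - x)
        = fun j => (c i j - 1) * Qᵀ.mulVec x j := by
    intro i x
    rw [Matrix.mulVec_sub, Matrix.mulVec_mulVec]
    have : Qᵀ * (Q * Matrix.diagonal (c i) * Qᵀ) = Matrix.diagonal (c i) * Qᵀ := by
      rw [Matrix.mul_assoc Q, ← Matrix.mul_assoc Qᵀ, hQ1, Matrix.one_mul]
    rw [this]
    funext j
    simp only [← Matrix.mulVec_mulVec, Matrix.mulVec_diagonal, Pi.sub_apply]
    ring
  -- value of the error at x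
  have errval : ∀ x : Fin d → ℝ,
      (∑ i, w i * (((Q * Matrix.diagonal (c i) * Qᵀ).mulVec x - x) ⬝ᵥ
            B.mulVec ((Q * Matrix.diagonal (c i) * Qᵀ).mulVec x - x)))
        = ∑ j, (1 - p j) * (lam j * (Qᵀ.mulVec x j) ^ 2) := by
    intro x
    have h1 : ∀ i, ((Q * Matrix.diagonal (c i) * Qᵀ).mulVec x - x) ⬝ᵥ
            B.mulVec ((Q * Matrix.diagonal (c i) * Qᵀ).mulVec x - x)
          = ∑ j, (1 - c i j) * (lam j * (Qᵀ.mulVec x j) ^ 2) := by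
      intro i
      rw [quadB, ]
      refine Finset.sum_congr rfl fun j _ => ?_
      rw [herrvec i x]
      rcases hc i j with h | h <;> simp [h] <;> ring
    simp only [h1, Finset.mul_sum]
    rw [Finset.sum_comm]
    refine Finset.sum_congr rfl fun j _ => ?_
    rw [hp j]
    rw [show (1 : ℝ) - ∑ i, w i * c i j = ∑ i, w i * (1 - c i j) by
      simp [mul_sub, Finset.sum_sub_distrib, hw1]]
    rw [Finset.sum_mul]
    exact Finset.sum_congr rfl fun i _ => by ring
  -- minimizer
  obtain ⟨j0, hj0⟩ := Finite.exists_min p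
  have hinf : (⨅ j, p j) = p j0 :=
    le_antisymm (ciInf_le (Finite.bddBelow_range p) j0) (le_ciInf hj0)
  -- the set
  set T : Set ℝ := {e : ℝ | ∃ x : Fin d → ℝ, x ⬝ᵥ B.mulVec x = 1 ∧
      e = ∑ i, w i * (((Q * Matrix.diagonal (c i) * Qᵀ).mulVec x - x) ⬝ᵥ
            B.mulVec ((Q * Matrix.diagonal (c i) * Qᵀ).mulVec x - x))} with hT
  -- membership of the max value
  have hmem : (1 - p j0) ∈ T := by
    refine ⟨Q.mulVec (fun j => if j = j0 then (Real.sqrt (lam j0))⁻¹ else 0), ?_, ?_⟩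
    · rw [quadB, hQv]
      rw [Finset.sum_eq_single j0]
      · simp [(hlam j0).le, Real.sq_sqrt, inv_pow, mul_inv_cancel₀ (hlam j0).ne']
      · intro b _ hb; simp [hb]
      · simp
    · rw [errval, hQv]
      rw [Finset.sum_eq_single j0]
      · simp [(hlam j0).le, Real.sq_sqrt, inv_pow]
        rw [mul_inv_cancel₀ (hlam j0).ne']
        ring
      · intro b _ hb; simp [hb]
      · simp
  -- upper bound
  have hub : ∀ e ∈ T, e ≤ 1 - p j0 := by
    rintro e ⟨x, hx1, rfl⟩
    rw [errval]
    calc ∑ j, (1 - p j) * (lam j * (Qᵀ.mulVec x j) ^ 2)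
        ≤ ∑ j, (1 - p j0) * (lam j * (Qᵀ.mulVec x j) ^ 2) := by
          refine Finset.sum_le_sum fun j _ => ?_
          exact mul_le_mul_of_nonneg_right (by linarith [hj0 j])
            (mul_nonneg (hlam j).le (sq_nonneg _))
      _ = 1 - p j0 := by
          rw [← Finset.mul_sum, ← quadB, hx1, mul_one]
  have hsup : errSup = 1 - p j0 := by
    rw [herr]
    exact le_antisymm (csSup_le ⟨_, hmem⟩ hub) (le_csSup ⟨1 - p j0, hub⟩ hmem)
  -- expected rank
  have hrank : ∀ i : ι, ((Matrix.diagonal (c i) * Qᵀ).rank : ℝ) = ∑ j, c i j := by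
    intro i
    rw [Matrix.rank_mul_eq_left_of_isUnit_det Qᵀ _ (Matrix.isUnit_det_of_right_inverse hQ1),
      Matrix.rank_diagonal]
    rw [Fintype.card_subtype]
    rw [Finset.card_eq_sum_ones]
    push_cast
    rw [Finset.sum_filter]
    refine Finset.sum_congr rfl fun j _ => ?_
    rcases hc i j with h | h <;> simp [h]
  have hexp : expRank = ∑ j, p j := by
    rw [hrk]
    simp only [hrank, Finset.mul_sum]
    rw [Finset.sum_comm]
    exact Finset.sum_congr rfl fun j _ => (hp j).symm
  refine ⟨by rw [hsup, hinf], hexp, ?_⟩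
  intro q hq
  have h1 : errSup = 1 - q := by rw [hsup, hq j0]
  have h2 : expRank = q * d := by
    rw [hexp]; simp [hq, Finset.sum_const, mul_comm]
  refine ⟨h1, h2, ?_⟩
  rw [h1, h2]
  field_simp
  ring
end
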